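/- For every integer n ≥ 1 the polynomial A₂(x,n) has degree 2(n−1) with leading coefficient 2^{2n}/((n−1)!)², it is even, i.e. A₂(x,n) = A₂(−x,n) as polynomials, its constant term is A₂(0,n) = (1+(−1)^{n−1})², and its value at x = 1 is A₂(1,n) = 4n². -/

import Mathlib

/-- The polynomial `[x choose k] = x(x−1)⋯(x−k+1)/k!`. -/
noncomputable def binomPoly (k : ℕ) : Polynomial ℚ :=
  Polynomial.C ((k.factorial : ℚ))⁻¹ *
    ∏ i ∈ Finset.range k, (Polynomial.X - Polynomial.C (i : ℚ))

/-- `a₂(x,n) = ∑_{ν=0}^n C(n,ν)·[x−ν+n−1 choose n−1]`. -/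
noncomputable def a2Poly (n : ℕ) : Polynomial ℚ :=
  ∑ ν ∈ Finset.range (n + 1),
    Polynomial.C ((n.choose ν : ℚ)) *
      (binomPoly (n - 1)).comp (Polynomial.X + Polynomial.C ((n : ℚ) - 1 - (ν : ℚ)))

section Helpers
open Polynomial Finset

lemma factor_eq (c : ℚ) (i : ℕ) : X + C c - C (i:ℚ) = X + C (c - i) := by
  rw [C_sub]; ring

lemma shift_prod_monic (k : ℕ) (c : ℚ) : (∏ i ∈ range k, (X + C c - C (i:ℚ))).Monic := by
  apply monic_prod_of_monic
  intro i _
  rw [factor_eq]; exact monic_X_add_C _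

lemma shift_prod_natDegree (k : ℕ) (c : ℚ) :
    (∏ i ∈ range k, (X + C c - C (i:ℚ))).natDegree = k := by
  rw [natDegree_prod_of_monic]
  · have h : ∀ i ∈ range k, (X + C c - C (i:ℚ)).natDegree = 1 := by
      intro i _
      rw [factor_eq]; exact natDegree_X_add_C (c - i)
    rw [Finset.sum_congr rfl h]
    simp
  · intro i _
    rw [factor_eq]; exact monic_X_add_C _

lemma binomPoly_comp (k : ℕ) (q : Polynomial ℚ) :
    (binomPoly k).comp q = C ((k.factorial : ℚ))⁻¹ * ∏ i ∈ range k, (q - C (i:ℚ)) := by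
  simp [binomPoly, mul_comp, Polynomial.prod_comp, sub_comp]


lemma shift_prod_coeff (k : ℕ) (c : ℚ) :
    (∏ i ∈ range k, (X + C c - C (i:ℚ))).coeff k = 1 := by
  have h := (shift_prod_monic k c).coeff_natDegree
  rwa [shift_prod_natDegree] at h

lemma a2_coeff (n : ℕ) :
    (a2Poly n).coeff (n - 1) = 2 ^ n / (((n-1).factorial : ℚ)) := by
  rw [a2Poly, finset_sum_coeff]
  have h : ∀ ν ∈ range (n+1),
      (C ((n.choose ν : ℚ)) * (binomPoly (n-1)).comp (X + C ((n:ℚ) - 1 - ν))).coeff (n-1)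
        = (n.choose ν : ℚ) * (((n-1).factorial : ℚ))⁻¹ := by
    intro ν _
    rw [binomPoly_comp, coeff_C_mul, coeff_C_mul, shift_prod_coeff, mul_one]
  rw [Finset.sum_congr rfl h, ← Finset.sum_mul]
  rw [show ∑ ν ∈ range (n+1), (n.choose ν : ℚ) = 2^n by
    exact_mod_cast congrArg (Nat.cast : ℕ → ℚ) (Nat.sum_range_choose n)]
  rw [div_eq_mul_inv]

lemma a2_natDegree_le (n : ℕ) : (a2Poly n).natDegree ≤ n - 1 := by
  apply natDegree_sum_le_of_forall_le
  intro ν _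
  rw [binomPoly_comp, ← mul_assoc, ← C_mul]
  refine le_trans (natDegree_mul_le) ?_
  rw [natDegree_C, shift_prod_natDegree, zero_add]

lemma a2_natDegree (n : ℕ) (hn : 1 ≤ n) : (a2Poly n).natDegree = n - 1 := by
  refine le_antisymm (a2_natDegree_le n) (le_natDegree_of_ne_zero ?_)
  rw [a2_coeff]
  positivity

lemma a2_leadingCoeff (n : ℕ) (hn : 1 ≤ n) :
    (a2Poly n).leadingCoeff = 2 ^ n / (((n-1).factorial : ℚ)) := by
  rw [leadingCoeff, a2_natDegree n hn, a2_coeff]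

lemma cast_sub_sub (k j : ℕ) (hj : j < k) : ((k - 1 - j : ℕ) : ℚ) = (k:ℚ) - 1 - j := by
  rw [Nat.cast_sub (by omega), Nat.cast_sub (by omega)]
  norm_num

lemma binom_comp_neg (k : ℕ) (c : ℚ) :
    (binomPoly k).comp (-X + C c) =
      C ((-1:ℚ)^k) * (binomPoly k).comp (X + C ((k:ℚ) - 1 - c)) := by
  rw [binomPoly_comp, binomPoly_comp]
  have h1 : ∏ i ∈ range k, (-X + C c - C (i:ℚ)) =
      (-1:ℚ[X])^k * ∏ i ∈ range k, (X - C c + C (i:ℚ)) := by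
    rw [show ∏ i ∈ range k, (-X + C c - C (i:ℚ))
        = ∏ i ∈ range k, ((-1:ℚ[X]) * (X - C c + C (i:ℚ))) from
      Finset.prod_congr rfl (fun i _ => by ring),
      Finset.prod_mul_distrib, Finset.prod_const, Finset.card_range]
  have h2 : ∏ i ∈ range k, (X + C ((k:ℚ) - 1 - c) - C (i:ℚ)) =
      ∏ i ∈ range k, (X - C c + C (i:ℚ)) := by
    rw [← Finset.prod_range_reflect (fun i => X - C c + C (i:ℚ)) k]
    refine Finset.prod_congr rfl (fun j hj => ?_)
    have h := cast_sub_sub k j (mem_range.mp hj)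
    simp only [h, C_sub, C_add, C_1]
    push_cast
    ring
  rw [h1, h2]
  have h3 : (C ((-1:ℚ)^k) : ℚ[X]) = (-1:ℚ[X])^k := by
    rw [map_pow, map_neg, map_one]
  rw [h3]
  ring

lemma a2_comp_neg (n : ℕ) (hn : 1 ≤ n) :
    (a2Poly n).comp (-X) = C ((-1:ℚ)^(n-1)) * a2Poly n := by
  have hcast : ((n-1 : ℕ) : ℚ) = (n:ℚ) - 1 := by
    rw [Nat.cast_sub hn]; norm_num
  rw [a2Poly, Polynomial.sum_comp]
  have lhs_eq : ∀ ν ∈ range (n+1),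
      (C ((n.choose ν : ℚ)) * (binomPoly (n-1)).comp (X + C ((n:ℚ)-1-ν))).comp (-X)
        = C ((-1:ℚ)^(n-1)) *
            (C ((n.choose ν : ℚ)) * (binomPoly (n-1)).comp (X + C ((ν:ℚ)-1))) := by
    intro ν _
    rw [mul_comp, C_comp, comp_assoc, add_comp, X_comp, C_comp, binom_comp_neg, hcast,
      show ((n:ℚ)-1) - 1 - ((n:ℚ)-1-(ν:ℚ)) = (ν:ℚ)-1 from by ring]
    ring
  rw [Finset.sum_congr rfl lhs_eq,
    ← Finset.sum_range_reflect
      (fun ν => C ((-1:ℚ)^(n-1)) *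
        (C ((n.choose ν : ℚ)) * (binomPoly (n-1)).comp (X + C ((ν:ℚ)-1)))) (n+1),
    Finset.mul_sum]
  refine Finset.sum_congr rfl (fun j hj => ?_)
  have hjn : j ≤ n := by have := mem_range.mp hj; omega
  have h1 : n + 1 - 1 - j = n - j := by omega
  have h2 : (n.choose (n - j) : ℚ) = (n.choose j : ℚ) := by
    rw [Nat.choose_symm hjn]
  have h3 : ((n - j : ℕ) : ℚ) - 1 = (n:ℚ) - 1 - j := by
    rw [Nat.cast_sub hjn]; ring
  rw [h1, h2, h3]

lemma A2_aux_comp (n : ℕ) (hn : 1 ≤ n) :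
    ((a2Poly n)^2).comp (-X) = (a2Poly n)^2 := by
  rw [pow_comp, a2_comp_neg n hn, mul_pow, ← C_pow, ← pow_mul, mul_comm (n-1) 2, pow_mul]
  norm_num

lemma binomPoly_eval (k : ℕ) (t : ℚ) :
    (binomPoly k).eval t = ((k.factorial : ℚ))⁻¹ * ∏ i ∈ range k, (t - (i:ℚ)) := by
  simp [binomPoly, eval_prod]

lemma prod_asc (k : ℕ) : ∏ i ∈ range k, ((i:ℚ) + 1) = k.factorial := by
  induction k with
  | zero => simp
  | succ m ih => rw [Finset.prod_range_succ, ih, Nat.factorial_succ]; push_cast; ring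

lemma prod_asc2 (k : ℕ) : ∏ i ∈ range k, ((i:ℚ) + 2) = (k+1).factorial := by
  induction k with
  | zero => simp
  | succ m ih =>
      rw [Finset.prod_range_succ, ih, show m+1+1 = m+2 from rfl, Nat.factorial_succ (m+1)]
      push_cast; ring

lemma prod_desc (k : ℕ) : ∏ i ∈ range k, ((k:ℚ) - i) = k.factorial := by
  rw [← prod_asc k, ← Finset.prod_range_reflect (fun i => (i:ℚ) + 1) k]
  refine Finset.prod_congr rfl (fun j hj => ?_)
  rw [cast_sub_sub k j (mem_range.mp hj)]; ring

lemma prod_desc2 (k : ℕ) : ∏ i ∈ range k, ((k:ℚ) + 1 - i) = (k+1).factorial := by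
  rw [← prod_asc2 k, ← Finset.prod_range_reflect (fun i => (i:ℚ) + 2) k]
  refine Finset.prod_congr rfl (fun j hj => ?_)
  rw [cast_sub_sub k j (mem_range.mp hj)]; ring

lemma prod_neg (k : ℕ) : ∏ i ∈ range k, ((-1:ℚ) - i) = (-1)^k * k.factorial := by
  rw [← prod_asc k,
    show ∏ i ∈ range k, ((-1:ℚ) - i) = ∏ i ∈ range k, ((-1) * ((i:ℚ)+1)) from
      Finset.prod_congr rfl (fun i _ => by ring),
    Finset.prod_mul_distrib, Finset.prod_const, Finset.card_range]

lemma a2_eval (n : ℕ) (t : ℚ) :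
    (a2Poly n).eval t = ∑ ν ∈ range (n+1), (n.choose ν : ℚ) *
      (((n-1).factorial : ℚ))⁻¹ * ∏ i ∈ range (n-1), (t + ((n:ℚ)-1-ν) - i) := by
  rw [a2Poly, eval_finset_sum]
  refine Finset.sum_congr rfl (fun ν _ => ?_)
  rw [eval_mul, eval_C, eval_comp, eval_add, eval_X, eval_C, binomPoly_eval]
  ring

lemma a2_eval_zero (n : ℕ) (hn : 1 ≤ n) :
    (a2Poly n).eval 0 = 1 + (-1:ℚ)^(n-1) := by
  obtain ⟨m, rfl⟩ : ∃ m, n = m + 1 := ⟨n-1, by omega⟩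
  rw [a2_eval]
  simp only [Nat.add_sub_cancel]
  rw [Finset.sum_range_succ, Finset.sum_range_succ']
  have hmid : ∑ i ∈ range m, ((m+1).choose (i+1) : ℚ) * ((m.factorial : ℚ))⁻¹ *
      ∏ j ∈ range m, ((0:ℚ) + ((↑(m+1):ℚ)-1-(↑(i+1):ℚ)) - j) = 0 := by
    apply Finset.sum_eq_zero
    intro i hi
    have him := mem_range.mp hi
    have hz : (0:ℚ) + ((↑(m+1):ℚ)-1-(↑(i+1):ℚ)) - ((m-1-i : ℕ):ℚ) = 0 := by
      rw [cast_sub_sub m i him]; push_cast; ring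
    rw [Finset.prod_eq_zero (mem_range.mpr (show m-1-i < m by omega)) hz, mul_zero]
  rw [hmid]
  have h0 : ∏ j ∈ range m, ((0:ℚ) + ((↑(m+1):ℚ)-1-(↑(0:ℕ):ℚ)) - j) = m.factorial := by
    rw [← prod_desc m]
    refine Finset.prod_congr rfl (fun j _ => ?_)
    push_cast; ring
  have h1 : ∏ j ∈ range m, ((0:ℚ) + ((↑(m+1):ℚ)-1-(↑(m+1):ℚ)) - j) = (-1)^m * m.factorial := by
    rw [← prod_neg m]
    refine Finset.prod_congr rfl (fun j _ => ?_)
    push_cast; ring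
  rw [h0, h1]
  have hfac : (m.factorial : ℚ) ≠ 0 := by positivity
  field_simp
  simp [Nat.choose_self]

lemma a2_eval_one (n : ℕ) (hn : 1 ≤ n) : (a2Poly n).eval 1 = 2 * (n:ℚ) := by
  match n, hn with
  | 1, _ =>
    rw [a2_eval, Finset.sum_range_succ, Finset.sum_range_succ]
    norm_num
  | (m+2), _ =>
    rw [a2_eval]
    rw [Finset.sum_range_succ, Finset.sum_range_succ', Finset.sum_range_succ']
    simp only [show m+2-1 = m+1 from rfl]
    have hmid : ∑ i ∈ range m, ((m+2).choose (i+1+1) : ℚ) * (((m+1).factorial : ℚ))⁻¹ *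
        ∏ j ∈ range (m+1), ((1:ℚ) + ((↑(m+2):ℚ)-1-(↑(i+1+1):ℚ)) - j) = 0 := by
      apply Finset.sum_eq_zero
      intro i hi
      have him := mem_range.mp hi
      have hz : (1:ℚ) + ((↑(m+2):ℚ)-1-(↑(i+1+1):ℚ)) - ((m-i : ℕ):ℚ) = 0 := by
        rw [Nat.cast_sub (by omega)]; push_cast; ring
      rw [Finset.prod_eq_zero (mem_range.mpr (show m-i < m+1 by omega)) hz, mul_zero]
    rw [hmid]
    have hlast : ∏ j ∈ range (m+1), ((1:ℚ) + ((↑(m+2):ℚ)-1-(↑(m+2):ℚ)) - j) = 0 := by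
      apply Finset.prod_eq_zero (mem_range.mpr (show 0 < m+1 by omega))
      push_cast; ring
    rw [hlast]
    have h0 : ∏ j ∈ range (m+1), ((1:ℚ) + ((↑(m+2):ℚ)-1-(↑(0:ℕ):ℚ)) - j) = ((m+2).factorial : ℚ) := by
      rw [show ((m+2).factorial : ℚ) = ((m+1+1).factorial : ℚ) from rfl, ← prod_desc2 (m+1)]
      refine Finset.prod_congr rfl (fun j _ => ?_)
      push_cast; ring
    have h1 : ∏ j ∈ range (m+1), ((1:ℚ) + ((↑(m+2):ℚ)-1-(↑(0+1:ℕ):ℚ)) - j) = ((m+1).factorial : ℚ) := by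
      rw [← prod_desc (m+1)]
      refine Finset.prod_congr rfl (fun j _ => ?_)
      push_cast; ring
    rw [h0, h1]
    have hfac : ((m+1).factorial : ℚ) ≠ 0 := by positivity
    have hch : (((m+2).choose 1 : ℕ) : ℚ) = (m+2 : ℚ) := by
      rw [Nat.choose_one_right]; push_cast; ring
    have hfs : ((m+2).factorial : ℚ) = (m+2) * ((m+1).factorial : ℚ) := by
      rw [show (m+2) = (m+1)+1 from rfl, Nat.factorial_succ]; push_cast; ring
    simp only [Nat.choose_zero_right, Nat.cast_one, one_mul, hch, hfs]
    field_simp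
    push_cast
    ring

end Helpers

/-- `A₂(x,n) = a₂(x,n)²`. -/
noncomputable def A2Poly (n : ℕ) : Polynomial ℚ := (a2Poly n) ^ 2

/-- For `n ≥ 1`, `A₂(x,n)` has degree `2(n−1)` with leading coefficient `2^{2n}/((n−1)!)²`,
is even, has constant term `(1+(−1)^{n−1})²`, and value `4n²` at `x = 1`. -/
theorem stmt10 : ∀ n : ℕ, 1 ≤ n →
    (A2Poly n).natDegree = 2 * (n - 1) ∧
    (A2Poly n).leadingCoeff = 2 ^ (2 * n) / ((n - 1).factorial : ℚ) ^ 2 ∧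
    (A2Poly n).comp (-Polynomial.X) = A2Poly n ∧
    (A2Poly n).coeff 0 = (1 + (-1 : ℚ) ^ (n - 1)) ^ 2 ∧
    (A2Poly n).eval (1 : ℚ) = 4 * (n : ℚ) ^ 2 := by
  intro n hn
  refine ⟨?_, ?_, ?_, ?_, ?_⟩
  · rw [A2Poly, Polynomial.natDegree_pow, a2_natDegree n hn]
  · rw [A2Poly, Polynomial.leadingCoeff_pow, a2_leadingCoeff n hn, div_pow, ← pow_mul,
      mul_comm n 2]
  · rw [A2Poly]; exact A2_aux_comp n hn
  · rw [A2Poly, Polynomial.coeff_zero_eq_eval_zero, Polynomial.eval_pow, a2_eval_zero n hn]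
  · rw [A2Poly, Polynomial.eval_pow, a2_eval_one n hn]; push_cast; ring
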